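/- Let λ₁ > 0, λ₂ ≥ 0 and μ₁, μ₂ > 0, and suppose both warm standby systems have the same unit failure rates λ₁₁ = λ₂₁ = λ₁ and λ₁₂ = λ₂₂ = λ₂. Then μ₁ ≥ μ₂ if and only if r^W_1(t) ≤ r^W_2(t) for all t > 0, i.e. τ^W_1 ≥_hr τ^W_2. -/

import Mathlib

/-- The real hyperbolic cotangent. -/
noncomputable def coth (x : ℝ) : ℝ := Real.cosh x / Real.sinh x

/-- `a_i = sqrt((λ₂ + μ_i)² + 4 λ₁ μ_i)` for the warm standby system. -/
noncomputable def aW (l1 l2 m : ℝ) : ℝ := Real.sqrt ((l2 + m) ^ 2 + 4 * l1 * m)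

/-- Hazard rate of the lifetime of the Markovian two-unit warm standby system. -/
noncomputable def rW (l1 l2 m t : ℝ) : ℝ :=
  2 * l1 * (l1 + l2) / (2 * l1 + l2 + m + aW l1 l2 m * coth (aW l1 l2 m * t / 2))

lemma my_sinh_le_mul_cosh {x : ℝ} (hx : 0 ≤ x) : Real.sinh x ≤ x * Real.cosh x := by
  have h : MonotoneOn (fun x : ℝ => x * Real.cosh x - Real.sinh x) (Set.Ici 0) := by
    apply monotoneOn_of_deriv_nonneg (convex_Ici 0)
    · fun_prop
    · fun_prop
    · intro x hx
      rw [interior_Ici, Set.mem_Ioi] at hx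
      have hder : HasDerivAt (fun x : ℝ => x * Real.cosh x - Real.sinh x)
          (x * Real.sinh x) x := by
        have := ((hasDerivAt_id x).mul (Real.hasDerivAt_cosh x)).sub (Real.hasDerivAt_sinh x)
        refine this.congr_deriv ?_
        simp [id_eq, mul_comm]
      rw [hder.deriv]
      positivity
  have := h (Set.self_mem_Ici) (Set.mem_Ici.2 hx) hx
  simpa using this

lemma my_sinh_ratio {s t : ℝ} (hs : 0 ≤ s) (hst : s ≤ t) :
    t * Real.sinh s ≤ s * Real.sinh t := by
  have h : MonotoneOn (fun x : ℝ => s * Real.sinh x - x * Real.sinh s) (Set.Ici s) := by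
    apply monotoneOn_of_deriv_nonneg (convex_Ici s)
    · fun_prop
    · fun_prop
    · intro x hx
      rw [interior_Ici, Set.mem_Ioi] at hx
      have hd : deriv (fun x : ℝ => s * Real.sinh x - x * Real.sinh s) x
          = s * Real.cosh x - Real.sinh s := by
        simp [Real.deriv_sinh]
      rw [hd]
      have h1 : Real.sinh s ≤ s * Real.cosh s := my_sinh_le_mul_cosh hs
      have h2 : Real.cosh s ≤ Real.cosh x := by
        rw [Real.cosh_le_cosh, abs_of_nonneg hs, abs_of_nonneg (hs.trans hx.le)]
        exact hx.le
      nlinarith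
  have := h (Set.self_mem_Ici) (Set.mem_Ici.2 hst) hst
  simp at this
  linarith

/-- `u ↦ u * coth u` is monotone on positive reals. -/
lemma mul_coth_mono {u v : ℝ} (hu : 0 < u) (huv : u ≤ v) :
    u * coth u ≤ v * coth v := by
  have hv : 0 < v := hu.trans_le huv
  have hsu : 0 < Real.sinh u := Real.sinh_pos_iff.2 hu
  have hsv : 0 < Real.sinh v := Real.sinh_pos_iff.2 hv
  rw [coth, coth, mul_div_assoc', mul_div_assoc', div_le_div_iff₀ hsu hsv]
  -- need u * cosh u * sinh v ≤ v * cosh v * sinh u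
  have key := my_sinh_ratio (s := v - u) (t := v + u) (by linarith) (by linarith)
  rw [Real.sinh_sub, Real.sinh_add] at key
  nlinarith

theorem warm_hr_iff_repair (l1 l2 m1 m2 : ℝ)
    (h1 : 0 < l1) (h2 : 0 ≤ l2) (hm1 : 0 < m1) (hm2 : 0 < m2) :
    m1 ≥ m2 ↔ ∀ t > (0 : ℝ), rW l1 l2 m1 t ≤ rW l1 l2 m2 t := by
  have ha : ∀ m : ℝ, 0 < m → 0 < aW l1 l2 m := fun m hm => by
    apply Real.sqrt_pos.2; positivity
  have hcoth : ∀ x : ℝ, 0 < x → 0 < coth x := fun x hx => by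
    rw [coth]
    exact div_pos (Real.cosh_pos x) (Real.sinh_pos_iff.2 hx)
  have hD : ∀ m t : ℝ, 0 < m → 0 < t →
      0 < 2 * l1 + l2 + m + aW l1 l2 m * coth (aW l1 l2 m * t / 2) := by
    intro m t hm ht
    have h3 := mul_pos (ha m hm)
      (hcoth (aW l1 l2 m * t / 2) (div_pos (mul_pos (ha m hm) ht) two_pos))
    linarith
  have hamono : ∀ mA mB : ℝ, 0 < mA → mA ≤ mB → aW l1 l2 mA ≤ aW l1 l2 mB := by
    intro mA mB hA hAB
    apply Real.sqrt_le_sqrt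
    nlinarith
  have hterm : ∀ mA mB t : ℝ, 0 < mA → mA ≤ mB → 0 < t →
      aW l1 l2 mA * coth (aW l1 l2 mA * t / 2) ≤ aW l1 l2 mB * coth (aW l1 l2 mB * t / 2) := by
    intro mA mB t hA hAB ht
    have haA := ha mA hA
    have haB := ha mB (hA.trans_le hAB)
    have hle := hamono mA mB hA hAB
    have key := mul_coth_mono (u := aW l1 l2 mA * t / 2) (v := aW l1 l2 mB * t / 2)
      (by positivity) (by gcongr)
    have h2t : (0:ℝ) < 2 / t := by positivity
    calc aW l1 l2 mA * coth (aW l1 l2 mA * t / 2)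
        = (2 / t) * (aW l1 l2 mA * t / 2 * coth (aW l1 l2 mA * t / 2)) := by
          field_simp
      _ ≤ (2 / t) * (aW l1 l2 mB * t / 2 * coth (aW l1 l2 mB * t / 2)) := by
          exact mul_le_mul_of_nonneg_left key h2t.le
      _ = aW l1 l2 mB * coth (aW l1 l2 mB * t / 2) := by field_simp
  constructor
  · intro hge t ht
    rw [rW, rW]
    exact div_le_div_of_nonneg_left (by positivity) (hD m2 t hm2 ht)
      (by have := hterm m2 m1 t hm2 hge ht; linarith)
  · intro H
    by_contra hlt
    push_neg at hlt
    have hT := H 1 one_pos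
    rw [rW, rW] at hT
    have hd1 := hD m1 1 hm1 one_pos
    have hd2 := hD m2 1 hm2 one_pos
    have hstrict : 2 * l1 + l2 + m1 + aW l1 l2 m1 * coth (aW l1 l2 m1 * 1 / 2)
        < 2 * l1 + l2 + m2 + aW l1 l2 m2 * coth (aW l1 l2 m2 * 1 / 2) := by
      have := hterm m1 m2 1 hm1 hlt.le one_pos
      linarith
    have : 2 * l1 * (l1 + l2) / (2 * l1 + l2 + m2 + aW l1 l2 m2 * coth (aW l1 l2 m2 * 1 / 2))
        < 2 * l1 * (l1 + l2) / (2 * l1 + l2 + m1 + aW l1 l2 m1 * coth (aW l1 l2 m1 * 1 / 2)) := by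
      apply div_lt_div_of_pos_left (by positivity) hd1 hstrict
    linarith
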